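/- Let $K_1, K_2$ be convex bodies in $\mathbb{R}^d$ with $K_1 \subset x_1 + r_1 B^d$ and $K_2 \subset x_2 + r_2 B^d$ for some points $x_1, x_2 \in \mathbb{R}^d$ and radii $r_1, r_2 \ge 0$, where $B^d$ is the closed unit ball. Then for all $r \ge 0$ and $0 \le s \le t$, the volume difference satisfies $V_d(rK_1 + tK_2) - V_d(rK_1 + sK_2) \le \max_{1 \le i \le d}(t^i - s^i) \cdot \sum_{j=0}^{d-1} \kappa_d \binom{d}{j} r^j r_1^j r_2^{d-j}$, where $\kappa_d$ is the volume of $B^d$ and $rK_1 + tK_2$ denotes the Minkowski sum of the scaled bodies. -/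

import Mathlib

open Pointwise MeasureTheory MeasureTheory.Measure Metric Set Module RealInnerProductSpace

private lemma vol_le_vol_image_of_expand {d : ℕ} (S : Set (EuclideanSpace ℝ (Fin d)))
    (T : EuclideanSpace ℝ (Fin d) → EuclideanSpace ℝ (Fin d))
    (hT : ∀ x ∈ S, ∀ y ∈ S, ‖x - y‖ ≤ ‖T x - T y‖) :
    volume S ≤ volume (T '' S) := by
  classical
  have hfr : finrank ℝ (EuclideanSpace ℝ (Fin d)) = d := finrank_euclideanSpace_fin
  haveI : IsAddHaarMeasure (μH[(d:ℝ)] : Measure (EuclideanSpace ℝ (Fin d))) := by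
    have := isAddHaarMeasure_hausdorffMeasure (E := EuclideanSpace ℝ (Fin d))
    rwa [hfr] at this
  have huniq : (volume : Measure (EuclideanSpace ℝ (Fin d)))
      = addHaarScalarFactor volume (μH[(d:ℝ)]) • (μH[(d:ℝ)]) :=
    isAddLeftInvariant_eq_smul _ _
  have hinj : ∀ x ∈ S, ∀ y ∈ S, T x = T y → x = y := by
    intro x hx y hy hxy
    have h0 : ‖x - y‖ ≤ 0 := by simpa [hxy] using hT x hx y hy
    have h1 : x - y = 0 := by
      have := le_antisymm h0 (norm_nonneg _)
      rwa [norm_eq_zero] at this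
    exact sub_eq_zero.mp h1
  set g : EuclideanSpace ℝ (Fin d) → EuclideanSpace ℝ (Fin d) :=
    fun y => if hy : ∃ x, x ∈ S ∧ T x = y then hy.choose else 0 with hg
  have hgS : ∀ y ∈ T '' S, g y ∈ S ∧ T (g y) = y := by
    intro y hy
    obtain ⟨x, hx, rfl⟩ := hy
    have hex : ∃ x', x' ∈ S ∧ T x' = T x := ⟨x, hx, rfl⟩
    simp only [hg, dif_pos hex]
    exact ⟨hex.choose_spec.1, hex.choose_spec.2⟩
  have hgT : ∀ x ∈ S, g (T x) = x := by
    intro x hx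
    obtain ⟨h1, h2⟩ := hgS (T x) ⟨x, hx, rfl⟩
    exact hinj _ h1 _ hx h2
  have hSsub : S ⊆ g '' (T '' S) := by
    intro x hx
    exact ⟨T x, ⟨x, hx, rfl⟩, hgT x hx⟩
  have hglip : LipschitzOnWith 1 g (T '' S) := by
    rw [lipschitzOnWith_iff_dist_le_mul]
    intro y hy y' hy'
    obtain ⟨hy1, hy2⟩ := hgS y hy
    obtain ⟨hy1', hy2'⟩ := hgS y' hy'
    have := hT _ hy1 _ hy1'
    rw [hy2, hy2'] at this
    simpa [dist_eq_norm] using this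
  have hH : μH[(d:ℝ)] S ≤ μH[(d:ℝ)] (T '' S) := by
    have h2 := hglip.hausdorffMeasure_image_le (show (0:ℝ) ≤ (d:ℝ) by positivity)
    simp only [ENNReal.coe_one, ENNReal.one_rpow, one_mul] at h2
    exact le_trans (measure_mono hSsub) h2
  rw [huniq]
  simp only [Measure.smul_apply, smul_eq_mul]
  exact mul_le_mul_right hH _
private lemma core_tube (X Y : Set (EuclideanSpace ℝ (Fin d)))
    (hXconv : Convex ℝ X) (hXc : IsCompact X) (hXn : X.Nonempty) (hXY : X ⊆ Y)
    (h : ℝ) (hh : 0 ≤ h) :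
    volume Y + volume (X + closedBall 0 h) ≤ volume X + volume (Y + closedBall 0 h) := by
  classical
  have hXm : MeasurableSet X := hXc.isClosed.measurableSet
  have hproj : ∀ z : EuclideanSpace ℝ (Fin d), ∃ p, p ∈ X ∧ ∀ w ∈ X, ⟪z - p, w - p⟫ ≤ 0 := by
    intro z
    obtain ⟨p, hpX, hp⟩ :=
      exists_norm_eq_iInf_of_complete_convex hXn hXc.isClosed.isComplete hXconv z
    exact ⟨p, hpX, (norm_eq_iInf_iff_real_inner_le_zero hXconv hpX).1 hp⟩
  choose P hPX hP using hproj
  set S := Y \ X with hSdef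
  set ν : EuclideanSpace ℝ (Fin d) → EuclideanSpace ℝ (Fin d) :=
    fun z => (‖z - P z‖)⁻¹ • (z - P z) with hν
  set T : EuclideanSpace ℝ (Fin d) → EuclideanSpace ℝ (Fin d) :=
    fun z => z + h • ν z with hTdef
  have hδpos : ∀ z ∈ S, 0 < ‖z - P z‖ := by
    intro z hz
    rw [norm_pos_iff, sub_ne_zero]
    intro e
    exact hz.2 (e ▸ hPX z)
  have hsmul : ∀ z ∈ S, ‖z - P z‖ • ν z = z - P z := by
    intro z hz
    simp only [hν]
    exact smul_inv_smul₀ (hδpos z hz).ne' _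
  have hνnorm : ∀ z ∈ S, ‖ν z‖ = 1 := by
    intro z hz
    have hd := hδpos z hz
    simp only [hν, norm_smul, norm_inv, norm_norm]
    field_simp
  have huu : ∀ z ∈ S, ⟪ν z, ν z⟫ = 1 := by
    intro z hz
    rw [real_inner_self_eq_norm_mul_norm, hνnorm z hz]; ring
  have hint : ∀ z ∈ S, ∀ w ∈ X, ⟪ν z, w - P z⟫ ≤ 0 := by
    intro z hz w hw
    have h1 := hP z w hw
    have h2 : ⟪ν z, w - P z⟫ = ‖z - P z‖⁻¹ * ⟪z - P z, w - P z⟫ := by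
      simp only [hν]
      exact real_inner_smul_left _ _ _
    rw [h2]
    exact mul_nonpos_of_nonneg_of_nonpos (inv_nonneg.2 (norm_nonneg _)) h1
  have hself : ∀ z ∈ S, ⟪ν z, z - P z⟫ = ‖z - P z‖ := by
    intro z hz
    nth_rewrite 1 [← hsmul z hz]
    rw [real_inner_smul_right, huu z hz, mul_one]
  -- key monotonicity of ν
  have hkey : ∀ z ∈ S, ∀ z' ∈ S, 0 ≤ ⟪z - z', ν z - ν z'⟫ := by
    intro z hz z' hz'
    have F1 : ⟪ν z, z - P z⟫ = ‖z - P z‖ := hself z hz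
    have G1 : ⟪ν z', z' - P z'⟫ = ‖z' - P z'‖ := hself z' hz'
    have F2 : ⟪ν z, P z' - P z⟫ ≤ 0 := hint z hz (P z') (hPX z')
    have G2 : ⟪ν z', P z - P z'⟫ ≤ 0 := hint z' hz' (P z) (hPX z)
    have F3 : ⟪ν z, z' - P z'⟫ = ‖z' - P z'‖ * ⟪ν z, ν z'⟫ := by
      nth_rewrite 1 [← hsmul z' hz']
      rw [real_inner_smul_right]
    have G3 : ⟪ν z', z - P z⟫ = ‖z - P z‖ * ⟪ν z', ν z⟫ := by
      nth_rewrite 1 [← hsmul z hz]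
      rw [real_inner_smul_right]
    have Hc : ⟪ν z', ν z⟫ = ⟪ν z, ν z'⟫ := real_inner_comm _ _
    have Hle : ⟪ν z, ν z'⟫ ≤ 1 := by
      have := real_inner_le_norm (ν z) (ν z')
      rwa [hνnorm z hz, hνnorm z' hz', mul_one] at this
    have hδ := hδpos z hz
    have hε := hδpos z' hz'
    have e1 : ⟪z - z', ν z - ν z'⟫
        = (⟪ν z, z - P z⟫ + ⟪ν z, P z - P z'⟫ - ⟪ν z, z' - P z'⟫)
          - (⟪ν z', z - P z⟫ + ⟪ν z', P z - P z'⟫ - ⟪ν z', z' - P z'⟫) := by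
      rw [real_inner_comm]
      simp only [inner_sub_left, inner_sub_right, inner_add_right]
      ring
    have e2 : ⟪ν z, P z - P z'⟫ = - ⟪ν z, P z' - P z⟫ := by
      simp only [inner_sub_right]; ring
    have e3 : ⟪ν z', P z - P z'⟫ ≤ 0 := G2
    rw [e1, F1, G1, F3, G3, Hc, e2]
    nlinarith [mul_nonneg hδ.le (sub_nonneg.2 Hle), mul_nonneg hε.le (sub_nonneg.2 Hle)]
  -- expansion
  have hexp : ∀ z ∈ S, ∀ z' ∈ S, ‖z - z'‖ ≤ ‖T z - T z'‖ := by
    intro z hz z' hz'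
    have hk := hkey z hz z' hz'
    have e : T z - T z' = (z - z') + h • (ν z - ν z') := by
      simp only [hTdef, smul_sub]
      abel
    have hsq : ‖z - z'‖ ^ 2 ≤ ‖T z - T z'‖ ^ 2 := by
      rw [e, norm_add_sq_real]
      have h2 : 0 ≤ ⟪z - z', h • (ν z - ν z')⟫ := by
        rw [real_inner_smul_right]
        exact mul_nonneg hh hk
      nlinarith [sq_nonneg ‖h • (ν z - ν z')‖]
    nlinarith [norm_nonneg (z - z'), norm_nonneg (T z - T z')]
  -- image membership
  have hTmem : ∀ z ∈ S, T z ∈ (Y + closedBall 0 h) \ (X + closedBall 0 h) := by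
    intro z hz
    constructor
    · refine add_mem_add hz.1 ?_
      rw [mem_closedBall_zero_iff]
      rw [norm_smul, hνnorm z hz, mul_one, Real.norm_eq_abs, abs_of_nonneg hh]
    · rintro ⟨x, hx, b, hb, hxb⟩
      have hbn : ‖T z - x‖ ≤ h := by
        have e : T z - x = b := by rw [← hxb]; exact add_sub_cancel_left x b
        rw [e]
        simpa [mem_closedBall_zero_iff] using hb
      have hup : ⟪ν z, T z - x⟫ ≤ h := by
        have := real_inner_le_norm (ν z) (T z - x)
        rw [hνnorm z hz, one_mul] at this
        exact le_trans this hbn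
      have hlow : ‖z - P z‖ + h ≤ ⟪ν z, T z - x⟫ := by
        have e : T z - x = (z - P z) + (P z - x) + h • ν z := by
          simp only [hTdef]; abel
        rw [e, inner_add_right, inner_add_right, hself z hz, real_inner_smul_right,
          huu z hz, mul_one]
        have h3 : 0 ≤ ⟪ν z, P z - x⟫ := by
          have := hint z hz x hx
          simp only [inner_sub_right] at this ⊢
          linarith
        linarith
      have := hδpos z hz
      linarith
  -- measure bookkeeping
  have hXBm : MeasurableSet (X + closedBall 0 h) :=
    ((hXc.add (isCompact_closedBall 0 h)).isClosed).measurableSet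
  have e1 : volume X + volume S = volume Y := by
    have := measure_inter_add_diff (μ := volume) Y hXm
    rwa [Set.inter_eq_right.mpr hXY] at this
  have e2 : volume (X + closedBall 0 h) + volume ((Y + closedBall 0 h) \ (X + closedBall 0 h))
      = volume (Y + closedBall 0 h) := by
    have := measure_inter_add_diff (μ := volume) (Y + closedBall 0 h) hXBm
    rwa [Set.inter_eq_right.mpr (add_subset_add_right hXY)] at this
  have hvolS : volume S ≤ volume ((Y + closedBall 0 h) \ (X + closedBall 0 h)) := by
    refine le_trans (vol_le_vol_image_of_expand S T hexp) (measure_mono ?_)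
    rintro y ⟨z, hz, rfl⟩
    exact hTmem z hz
  calc volume Y + volume (X + closedBall 0 h)
      = volume X + (volume S + volume (X + closedBall 0 h)) := by rw [← e1]; ring
    _ ≤ volume X + (volume ((Y + closedBall 0 h) \ (X + closedBall 0 h))
          + volume (X + closedBall 0 h)) := by
        exact add_le_add_right (add_le_add_left hvolS _) _
    _ = volume X + volume (Y + closedBall 0 h) := by rw [← e2]; ring

private lemma arith_main (d : ℕ) (hd : 1 ≤ d) (κr a b s t M : ℝ) (hκ : 0 ≤ κr) (ha : 0 ≤ a)
    (hb : 0 ≤ b) (hs : 0 ≤ s) (hst : s ≤ t)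
    (hM : ∀ i ∈ Finset.Icc 1 d, t ^ i - s ^ i ≤ M) :
    (a + t * b) ^ d * κr - (a + s * b) ^ d * κr ≤
      M * ∑ j ∈ Finset.range d, κr * (d.choose j : ℝ) * a ^ j * b ^ (d - j) := by
  have expand : ∀ u : ℝ,
      (a + u * b) ^ d
        = (∑ j ∈ Finset.range d, (d.choose j : ℝ) * a ^ j * b ^ (d - j) * u ^ (d - j)) + a ^ d := by
    intro u
    rw [add_pow, Finset.sum_range_succ]
    simp only [Nat.choose_self, Nat.cast_one, mul_one, Nat.sub_self, pow_zero]
    congr 1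
    refine Finset.sum_congr rfl fun j hj => ?_
    rw [mul_pow]
    ring
  have step1 : (a + t * b) ^ d * κr - (a + s * b) ^ d * κr
      = ∑ j ∈ Finset.range d,
          (κr * (d.choose j : ℝ) * a ^ j * b ^ (d - j)) * (t ^ (d - j) - s ^ (d - j)) := by
    rw [expand t, expand s, add_mul, add_mul, Finset.sum_mul, Finset.sum_mul]
    have hXY : ∀ X Y C : ℝ, X + C - (Y + C) = X - Y := fun _ _ _ => by ring
    rw [hXY, ← Finset.sum_sub_distrib]
    exact Finset.sum_congr rfl fun j _ => by ring
  rw [step1, Finset.mul_sum]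
  refine Finset.sum_le_sum fun j hj => ?_
  have hmem : d - j ∈ Finset.Icc 1 d := by
    rw [Finset.mem_Icc]
    have := Finset.mem_range.1 hj
    omega
  have hfac : 0 ≤ κr * (d.choose j : ℝ) * a ^ j * b ^ (d - j) := by positivity
  calc (κr * (d.choose j : ℝ) * a ^ j * b ^ (d - j)) * (t ^ (d - j) - s ^ (d - j))
      ≤ (κr * (d.choose j : ℝ) * a ^ j * b ^ (d - j)) * M :=
        mul_le_mul_of_nonneg_left (hM _ hmem) hfac
    _ = M * (κr * (d.choose j : ℝ) * a ^ j * b ^ (d - j)) := by ring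

theorem stmt_3 (d : ℕ) (hd : 1 ≤ d)
    (K₁ K₂ : Set (EuclideanSpace ℝ (Fin d)))
    (hK₁conv : Convex ℝ K₁) (hK₂conv : Convex ℝ K₂)
    (hK₁c : IsCompact K₁) (hK₂c : IsCompact K₂)
    (hK₁n : K₁.Nonempty) (hK₂n : K₂.Nonempty)
    (x₁ x₂ : EuclideanSpace ℝ (Fin d)) (r₁ r₂ : ℝ) (hr₁ : 0 ≤ r₁) (hr₂ : 0 ≤ r₂)
    (hb₁ : K₁ ⊆ Metric.closedBall x₁ r₁) (hb₂ : K₂ ⊆ Metric.closedBall x₂ r₂)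
    (r s t : ℝ) (hr : 0 ≤ r) (hs : 0 ≤ s) (hst : s ≤ t) :
    (volume (r • K₁ + t • K₂)).toReal - (volume (r • K₁ + s • K₂)).toReal ≤
      ((Finset.Icc 1 d).sup' (Finset.nonempty_Icc.mpr hd) fun i => t ^ i - s ^ i) *
        ∑ j ∈ Finset.range d,
          (volume (Metric.closedBall (0 : EuclideanSpace ℝ (Fin d)) 1)).toReal *
            (d.choose j) * r ^ j * r₁ ^ j * r₂ ^ (d - j) := by
  classical
  have hts : 0 ≤ t - s := sub_nonneg.2 hst
  have ht0 : 0 ≤ t := hs.trans hst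
  set A : Set (EuclideanSpace ℝ (Fin d)) := r • K₁ + s • K₂ with hA
  set h0 : ℝ := (t - s) * r₂ with hh0def
  have hh0 : 0 ≤ h0 := mul_nonneg hts hr₂
  set R : ℝ := r * r₁ + s * r₂ with hRdef
  have hR : 0 ≤ R := by positivity
  set c : EuclideanSpace ℝ (Fin d) := r • x₁ + s • x₂ with hc
  have hsmulc : ∀ (u : ℝ) (K : Set (EuclideanSpace ℝ (Fin d))), IsCompact K →
      IsCompact (u • K) := by
    intro u K hK
    rw [← Set.image_smul]
    exact hK.image (continuous_const_smul u)
  have hAc : IsCompact A := (hsmulc r K₁ hK₁c).add (hsmulc s K₂ hK₂c)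
  have hAtc : IsCompact (r • K₁ + t • K₂) := (hsmulc r K₁ hK₁c).add (hsmulc t K₂ hK₂c)
  have hAconv : Convex ℝ A := (hK₁conv.smul r).add (hK₂conv.smul s)
  have hAn : A.Nonempty := (hK₁n.smul_set).add (hK₂n.smul_set)
  have hAball : A ⊆ closedBall c R := by
    intro x hx
    obtain ⟨y, hy, z, hz, rfl⟩ := Set.mem_add.mp hx
    obtain ⟨k1, hk1, rfl⟩ := Set.mem_smul_set.mp hy
    obtain ⟨k2, hk2, rfl⟩ := Set.mem_smul_set.mp hz
    rw [mem_closedBall, dist_eq_norm, hc]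
    have e : r • k1 + s • k2 - (r • x₁ + s • x₂) = r • (k1 - x₁) + s • (k2 - x₂) := by
      rw [smul_sub, smul_sub]; abel
    rw [e]
    have h1 : ‖r • (k1 - x₁) + s • (k2 - x₂)‖ ≤ r * ‖k1 - x₁‖ + s * ‖k2 - x₂‖ := by
      refine le_trans (norm_add_le _ _) ?_
      rw [norm_smul, norm_smul, Real.norm_eq_abs, Real.norm_eq_abs,
        abs_of_nonneg hr, abs_of_nonneg hs]
    have h2 : ‖k1 - x₁‖ ≤ r₁ := by rw [← dist_eq_norm]; exact mem_closedBall.1 (hb₁ hk1)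
    have h3 : ‖k2 - x₂‖ ≤ r₂ := by rw [← dist_eq_norm]; exact mem_closedBall.1 (hb₂ hk2)
    have h4 : r * ‖k1 - x₁‖ ≤ r * r₁ := mul_le_mul_of_nonneg_left h2 hr
    have h5 : s * ‖k2 - x₂‖ ≤ s * r₂ := mul_le_mul_of_nonneg_left h3 hs
    rw [hRdef]
    linarith
  set v : EuclideanSpace ℝ (Fin d) := (t - s) • x₂ with hv
  have hdec : r • K₁ + t • K₂ = A + (t - s) • K₂ := by
    have e : s + (t - s) = t := by ring
    rw [hA, add_assoc, ← hK₂conv.add_smul hs hts, e]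
  have hsub2 : (t - s) • K₂ ⊆ closedBall 0 h0 + {v} := by
    intro z hz
    obtain ⟨k, hk, rfl⟩ := Set.mem_smul_set.mp hz
    have hmem : (t - s) • k - v ∈ closedBall (0 : EuclideanSpace ℝ (Fin d)) h0 := by
      rw [mem_closedBall_zero_iff, hv, ← smul_sub, norm_smul, Real.norm_eq_abs,
        abs_of_nonneg hts, hh0def]
      have h6 := mem_closedBall.1 (hb₂ hk)
      rw [dist_eq_norm] at h6
      exact mul_le_mul_of_nonneg_left h6 hts
    have h7 := add_mem_add hmem (mem_singleton v)
    have e : ((t - s) • k - v) + v = (t - s) • k := by abel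
    rwa [e] at h7
  have hsub : r • K₁ + t • K₂ ⊆ (A + closedBall 0 h0) + {v} := by
    rw [hdec]
    calc A + (t - s) • K₂ ⊆ A + (closedBall 0 h0 + {v}) := add_subset_add_left hsub2
      _ = (A + closedBall 0 h0) + {v} := (add_assoc _ _ _).symm
  have htrans : volume ((A + closedBall 0 h0) + {v}) = volume (A + closedBall 0 h0) := by
    have e : (A + closedBall 0 h0) + {v} = (fun x => (-v) + x) ⁻¹' (A + closedBall 0 h0) := by
      ext x
      simp only [Set.add_singleton, mem_image, mem_preimage]
      constructor
      · rintro ⟨w, hw, rfl⟩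
        have e2 : -v + (w + v) = w := by abel
        rwa [e2]
      · intro hx
        exact ⟨-v + x, hx, by abel⟩
    rw [e, measure_preimage_add]
  have hcore := core_tube A (closedBall c R) hAconv hAc hAn hAball h0 hh0
  rw [closedBall_add_closedBall hR hh0, add_zero] at hcore
  have hmain : volume (r • K₁ + t • K₂) + volume (closedBall c R)
      ≤ volume A + volume (closedBall c (R + h0)) := by
    have h8 : volume (r • K₁ + t • K₂) ≤ volume (A + closedBall 0 h0) :=
      le_of_le_of_eq (measure_mono hsub) htrans
    calc volume (r • K₁ + t • K₂) + volume (closedBall c R)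
        ≤ volume (A + closedBall 0 h0) + volume (closedBall c R) := add_le_add_left h8 _
      _ = volume (closedBall c R) + volume (A + closedBall 0 h0) := add_comm _ _
      _ ≤ _ := hcore
  have hfr : finrank ℝ (EuclideanSpace ℝ (Fin d)) = d := finrank_euclideanSpace_fin
  have hball : ∀ ρ : ℝ, 0 ≤ ρ → volume (closedBall c ρ)
      = ENNReal.ofReal (ρ ^ d) * volume (closedBall (0 : EuclideanSpace ℝ (Fin d)) 1) := by
    intro ρ hρ
    rw [Measure.addHaar_closedBall' volume c hρ, hfr]
  set κ := volume (closedBall (0 : EuclideanSpace ℝ (Fin d)) 1) with hκdef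
  have hκfin : κ ≠ ⊤ := (isCompact_closedBall _ _).measure_lt_top.ne
  have hAfin : volume A ≠ ⊤ := hAc.measure_lt_top.ne
  have hAtfin : volume (r • K₁ + t • K₂) ≠ ⊤ := hAtc.measure_lt_top.ne
  rw [hball R hR, hball (R + h0) (by positivity)] at hmain
  have hreal : (volume (r • K₁ + t • K₂)).toReal + R ^ d * κ.toReal
      ≤ (volume A).toReal + (R + h0) ^ d * κ.toReal := by
    have fin1 : ENNReal.ofReal (R ^ d) * κ ≠ ⊤ :=
      ENNReal.mul_ne_top ENNReal.ofReal_ne_top hκfin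
    have fin2 : ENNReal.ofReal ((R + h0) ^ d) * κ ≠ ⊤ :=
      ENNReal.mul_ne_top ENNReal.ofReal_ne_top hκfin
    have hm := ENNReal.toReal_mono (ENNReal.add_ne_top.2 ⟨hAfin, fin2⟩) hmain
    rw [ENNReal.toReal_add hAtfin fin1, ENNReal.toReal_add hAfin fin2,
      ENNReal.toReal_mul, ENNReal.toReal_mul, ENNReal.toReal_ofReal (by positivity),
      ENNReal.toReal_ofReal (by positivity)] at hm
    linarith
  have harith := arith_main d hd κ.toReal (r * r₁) r₂ s t
    ((Finset.Icc 1 d).sup' (Finset.nonempty_Icc.mpr hd) fun i => t ^ i - s ^ i)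
    ENNReal.toReal_nonneg (by positivity) hr₂ hs hst
    (fun i hi => Finset.le_sup' (fun i => t ^ i - s ^ i) hi)
  have hRh : R + h0 = r * r₁ + t * r₂ := by rw [hRdef, hh0def]; ring
  have hsumeq : ∑ j ∈ Finset.range d, κ.toReal * (d.choose j : ℝ) * (r * r₁) ^ j * r₂ ^ (d - j)
      = ∑ j ∈ Finset.range d, κ.toReal * (d.choose j : ℝ) * r ^ j * r₁ ^ j * r₂ ^ (d - j) := by
    refine Finset.sum_congr rfl fun j _ => ?_
    rw [mul_pow]
    ring
  rw [hRh] at hreal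
  rw [hRdef] at hreal
  calc (volume (r • K₁ + t • K₂)).toReal - (volume A).toReal
      ≤ (r * r₁ + t * r₂) ^ d * κ.toReal - (r * r₁ + s * r₂) ^ d * κ.toReal := by linarith
    _ ≤ ((Finset.Icc 1 d).sup' (Finset.nonempty_Icc.mpr hd) fun i => t ^ i - s ^ i) *
          ∑ j ∈ Finset.range d, κ.toReal * (d.choose j : ℝ) * (r * r₁) ^ j * r₂ ^ (d - j) :=
        harith
    _ = ((Finset.Icc 1 d).sup' (Finset.nonempty_Icc.mpr hd) fun i => t ^ i - s ^ i) *
          ∑ j ∈ Finset.range d, κ.toReal * (d.choose j : ℝ) * r ^ j * r₁ ^ j * r₂ ^ (d - j) := by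
        rw [hsumeq]
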